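/- Let f_N(x) = (1-x^2)(P_N'(x))^2 + N^2 P_N(x)^2 for N \ge 2. If x_+ in (-1,1) satisfies P_N(x_+) = x_+ P_{N-1}(x_+) and P_N'(x_+) \ne 0, then f_N''(x_+) = -2(N-1)(P_N'(x_+))^2/(1-x_+^2) < 0; i.e., every such stationary point of f_N is a strict local maximum. -/

import Mathlib

open Polynomial

noncomputable def legendreP : ℕ → ℝ → ℝ
  | 0, _ => 1
  | 1, x => x
  | (n + 2), x =>
      ((2 * (n : ℝ) + 3) * x * legendreP (n + 1) x - ((n : ℝ) + 1) * legendreP n x) /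
        ((n : ℝ) + 2)

noncomputable def Lg : ℕ → Polynomial ℝ
  | 0 => 1
  | 1 => X
  | (n + 2) => C ((2 * (n : ℝ) + 3) / ((n : ℝ) + 2)) * (X * Lg (n + 1))
      - C (((n : ℝ) + 1) / ((n : ℝ) + 2)) * Lg n

lemma legendreP_eq : ∀ (n : ℕ) (x : ℝ), legendreP n x = (Lg n).eval x
  | 0, x => by simp [legendreP, Lg]
  | 1, x => by simp [legendreP, Lg]
  | (n + 2), x => by
      have h1 := legendreP_eq (n + 1) x
      have h2 := legendreP_eq n x
      have hn : ((n : ℝ) + 2) ≠ 0 := by positivity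
      simp only [legendreP, Lg, eval_sub, eval_mul, eval_C, eval_X, h1, h2]
      field_simp

lemma key : ∀ n : ℕ,
    derivative (Lg (n + 1)) = X * derivative (Lg n) + C ((n : ℝ) + 1) * Lg n ∧
    X * derivative (Lg (n + 1)) = derivative (Lg n) + C ((n : ℝ) + 1) * Lg (n + 1) := by
  intro n
  induction n with
  | zero => constructor <;> simp [Lg]
  | succ n ih =>
    obtain ⟨ih1, ih2⟩ := ih
    have hn : ((n : ℝ) + 2) ≠ 0 := by positivity
    -- derivative of recurrence
    have hdrec : derivative (Lg (n + 2)) =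
        C ((2 * (n : ℝ) + 3) / ((n : ℝ) + 2)) * (Lg (n + 1) + X * derivative (Lg (n + 1)))
        - C (((n : ℝ) + 1) / ((n : ℝ) + 2)) * derivative (Lg n) := by
      show derivative (C ((2 * (n : ℝ) + 3) / ((n : ℝ) + 2)) * (X * Lg (n + 1))
          - C (((n : ℝ) + 1) / ((n : ℝ) + 2)) * Lg n) = _
      simp [derivative_mul]
    have hI1 : derivative (Lg (n + 1 + 1)) =
        X * derivative (Lg (n + 1)) + C ((n : ℝ) + 1 + 1) * Lg (n + 1) := by
      apply Polynomial.funext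
      intro y
      have e1 := congrArg (eval y) hdrec
      have e2 := congrArg (eval y) ih2
      simp only [eval_add, eval_sub, eval_mul, eval_C, eval_X, push_cast] at e1 e2 ⊢
      push_cast at e1 e2 ⊢
      rw [e1]
      field_simp
      linear_combination ((n:ℝ) + 1) * e2
    have hrec : Lg (n + 2) = C ((2 * (n : ℝ) + 3) / ((n : ℝ) + 2)) * (X * Lg (n + 1))
        - C (((n : ℝ) + 1) / ((n : ℝ) + 2)) * Lg n := rfl
    have hB2 : (1 - X ^ 2) * derivative (Lg (n + 1)) =
        C ((n : ℝ) + 1) * (Lg n - X * Lg (n + 1)) := by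
      linear_combination ih1 - X * ih2
    have hI2 : X * derivative (Lg (n + 1 + 1)) =
        derivative (Lg (n + 1)) + C ((n : ℝ) + 1 + 1) * Lg (n + 1 + 1) := by
      apply Polynomial.funext
      intro y
      have e1 := congrArg (eval y) hI1
      have e2 := congrArg (eval y) hB2
      have e3 := congrArg (eval y) hrec
      simp only [eval_add, eval_sub, eval_mul, eval_one, eval_pow, eval_C, eval_X] at e1 e2 e3 ⊢
      push_cast at e1 e2 e3 ⊢
      rw [e1, e3]
      field_simp
      linear_combination (-((n:ℝ) + 2)) * e2
    exact ⟨by push_cast; exact hI1, by push_cast; exact hI2⟩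

lemma keyB (n : ℕ) : (1 - X ^ 2) * derivative (Lg n) = C ((n : ℝ) + 1) * (X * Lg n - Lg (n + 1)) := by
  linear_combination X * (key n).1 - (key n).2

lemma ode (n : ℕ) : (1 - X ^ 2) * derivative (derivative (Lg n)) =
    2 * X * derivative (Lg n) - C ((n : ℝ) * ((n : ℝ) + 1)) * Lg n := by
  have h := congrArg derivative (keyB n)
  simp only [derivative_mul, derivative_sub, derivative_one, derivative_pow, derivative_X,
    derivative_C, Nat.cast_ofNat, map_mul] at h
  have h1 := (key n).1
  apply Polynomial.funext
  intro y
  have e1 := congrArg (eval y) h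
  have e2 := congrArg (eval y) h1
  simp only [eval_add, eval_sub, eval_mul, eval_one, eval_pow, eval_C, eval_X, eval_zero,
    eval_ofNat] at e1 e2 ⊢
  linear_combination e1 - ((n:ℝ) + 1) * e2

lemma keyB2 (n : ℕ) : (1 - X ^ 2) * derivative (Lg (n + 1)) =
    C ((n : ℝ) + 1) * (Lg n - X * Lg (n + 1)) := by
  linear_combination (key n).1 - X * (key n).2

lemma hFd (n : ℕ) : derivative ((1 - X ^ 2) * (derivative (Lg n)) ^ 2 + C ((n : ℝ) ^ 2) * (Lg n) ^ 2)
    = 2 * derivative (Lg n) * (X * derivative (Lg n) - C (n : ℝ) * Lg n) := by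
  apply Polynomial.funext
  intro y
  have e := congrArg (eval y) (ode n)
  simp only [derivative_add, derivative_mul, derivative_pow, derivative_sub, derivative_one,
    derivative_X, derivative_C, eval_add, eval_sub, eval_mul, eval_one, eval_pow, eval_C,
    eval_X, eval_zero, eval_ofNat, Nat.cast_ofNat, pow_one, map_mul] at e ⊢
  linear_combination 2 * eval y (derivative (Lg n)) * e

theorem christoffel_stationary_local_max (N : ℕ) (hN : 2 ≤ N) (x : ℝ)
    (hx : x ∈ Set.Ioo (-1 : ℝ) 1)
    (hstat : legendreP N x = x * legendreP (N - 1) x)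
    (hderiv : deriv (legendreP N) x ≠ 0) :
    deriv (deriv (fun y : ℝ =>
        (1 - y ^ 2) * (deriv (legendreP N) y) ^ 2 + (N : ℝ) ^ 2 * (legendreP N y) ^ 2)) x =
      -2 * ((N : ℝ) - 1) * (deriv (legendreP N) x) ^ 2 / (1 - x ^ 2) ∧
    deriv (deriv (fun y : ℝ =>
        (1 - y ^ 2) * (deriv (legendreP N) y) ^ 2 + (N : ℝ) ^ 2 * (legendreP N y) ^ 2)) x < 0 := by
  obtain ⟨m, rfl⟩ : ∃ m, N = m + 2 := ⟨N - 2, by omega⟩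
  obtain ⟨hx1, hx2⟩ := hx
  have h1pos : (0 : ℝ) < 1 - x ^ 2 := by nlinarith
  have h1x : (1 : ℝ) - x ^ 2 ≠ 0 := ne_of_gt h1pos
  have hfun : legendreP (m + 2) = fun t : ℝ => (Lg (m + 2)).eval t := funext (legendreP_eq (m + 2))
  have hD : deriv (legendreP (m + 2)) = fun t : ℝ => (derivative (Lg (m + 2))).eval t := by
    rw [hfun]; funext t; exact Polynomial.deriv (p := Lg (m + 2))
  set p := (Lg (m + 2)).eval x with hp
  set d := (derivative (Lg (m + 2))).eval x with hd
  set d2 := (derivative (derivative (Lg (m + 2)))).eval x with hd2def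
  have hdne : d ≠ 0 := by rw [hD] at hderiv; exact hderiv
  have hstat' : p = x * (Lg (m + 1)).eval x := by
    have h : m + 2 - 1 = m + 1 := rfl
    rw [h, legendreP_eq, legendreP_eq] at hstat
    exact hstat
  have eB := congrArg (eval x) (keyB2 (m + 1))
  have eO := congrArg (eval x) (ode (m + 2))
  simp only [eval_add, eval_sub, eval_mul, eval_one, eval_pow, eval_C, eval_X, eval_ofNat] at eB eO
  push_cast at eB eO
  have hb : x * d = ((m : ℝ) + 2) * p := by
    apply mul_left_cancel₀ h1x
    linear_combination x * eB - ((m : ℝ) + 2) * hstat'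
  have hd2e : (1 - x ^ 2) * d2 = (1 - ((m : ℝ) + 2)) * (x * d) := by
    linear_combination eO + ((m : ℝ) + 3) * hb
  set F : Polynomial ℝ := (1 - X ^ 2) * (derivative (Lg (m + 2))) ^ 2
      + C (((m + 2 : ℕ) : ℝ) ^ 2) * (Lg (m + 2)) ^ 2 with hF
  have hFeq : (fun y : ℝ =>
      (1 - y ^ 2) * (deriv (legendreP (m + 2)) y) ^ 2
        + ((m + 2 : ℕ) : ℝ) ^ 2 * (legendreP (m + 2) y) ^ 2)
      = fun y : ℝ => F.eval y := by
    funext y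
    rw [hD, hfun, hF]
    simp only [eval_add, eval_sub, eval_mul, eval_one, eval_pow, eval_C, eval_X]
  have hval : deriv (deriv (fun y : ℝ =>
      (1 - y ^ 2) * (deriv (legendreP (m + 2)) y) ^ 2
        + ((m + 2 : ℕ) : ℝ) ^ 2 * (legendreP (m + 2) y) ^ 2)) x
      = -2 * (((m + 2 : ℕ) : ℝ) - 1) * d ^ 2 / (1 - x ^ 2) := by
    rw [hFeq]
    have hstep : deriv (fun y : ℝ => F.eval y) = fun y : ℝ => (derivative F).eval y := by
      funext t; exact Polynomial.deriv (p := F)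
    rw [hstep]
    have hstep2 : deriv (fun y : ℝ => (derivative F).eval y) x
        = (derivative (derivative F)).eval x := Polynomial.deriv (p := derivative F)
    rw [hstep2, hF, hFd (m + 2)]
    simp only [derivative_mul, derivative_sub, derivative_X, derivative_C, derivative_ofNat,
      eval_add, eval_sub, eval_mul, eval_one, eval_pow, eval_C, eval_X, eval_zero, eval_ofNat]
    push_cast
    rw [eq_div_iff h1x]
    linear_combination (2 * d2 * (1 - x ^ 2) + 2 * d * x * x - 2 * d * x ^ 2) * hb
      + 2 * d * x * hd2e
  have hdx : deriv (legendreP (m + 2)) x = d := by rw [hD]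
  rw [hdx]
  refine ⟨hval, ?_⟩
  rw [hval]
  apply div_neg_of_neg_of_pos _ h1pos
  have hdsq : (0 : ℝ) < d ^ 2 := by positivity
  have : (0 : ℝ) < ((m + 2 : ℕ) : ℝ) - 1 := by push_cast; linarith [Nat.cast_nonneg (α := ℝ) m]
  nlinarith
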